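/- A connected graph G has local outer multiset dimension 1 if and only if G is bipartite. -/
import Mathlib


open SimpleGraph Finset

/-- The representation multiset of `u` with respect to `W`: the multiset of distances
from `u` to the vertices of `W`. -/
noncomputable def mrep {V : Type*} (G : SimpleGraph V) (u : V) (W : Finset V) : Multiset ℕ :=
  W.val.map fun w => G.dist u w

/-- `W` is a local outer multiset resolving set: adjacent vertices outside `W`
have distinct representation multisets. -/
def IsLocalOuterMultisetResolving {V : Type*} (G : SimpleGraph V) (W : Finset V) : Prop :=
  ∀ u v : V, u ∉ W → v ∉ W → G.Adj u v → mrep G u W ≠ mrep G v W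

lemma walk_parity {V : Type*} {G : SimpleGraph V} (c : G.Coloring (ZMod 2)) {u w : V}
    (p : G.Walk u w) : (c u : ZMod 2) = c w + p.length := by
  induction p with
  | nil => simp
  | cons h q ih =>
    have hne := c.valid h
    have : ∀ a b : ZMod 2, a ≠ b → a = b + 1 := by decide
    rw [this _ _ hne, ih]
    push_cast [SimpleGraph.Walk.length_cons]
    ring

/-- In a 2-colorable connected graph, colors determine distance parity. -/
lemma dist_parity {V : Type*} {G : SimpleGraph V} (hconn : G.Connected)
    (c : G.Coloring (ZMod 2)) (u w : V) : (c u : ZMod 2) = c w + G.dist u w := by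
  obtain ⟨p, hp⟩ := hconn.exists_walk_length_eq_dist u w
  rw [← hp]; exact walk_parity c p

/-- A connected graph `G` (with at least one edge) has local outer multiset dimension 1
if and only if `G` is bipartite. -/
theorem stmt_9 {V : Type*} [Fintype V] (G : SimpleGraph V)
    (hconn : G.Connected) (hedge : ∃ u v : V, G.Adj u v) :
    sInf {k : ℕ | ∃ W : Finset V, IsLocalOuterMultisetResolving G W ∧ W.card = k} = 1 ↔
      G.Colorable 2 := by
  obtain ⟨a, b, hab⟩ := hedge
  set S : Set ℕ := {k : ℕ | ∃ W : Finset V, IsLocalOuterMultisetResolving G W ∧ W.card = k}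
  have h0 : 0 ∉ S := by
    rintro ⟨W, hres, hcard⟩
    rw [Finset.card_eq_zero] at hcard
    subst hcard
    exact hres a b (by simp) (by simp) hab (by simp [mrep])
  constructor
  · intro hs
    have hSne : S.Nonempty := by
      by_contra h
      rw [Set.not_nonempty_iff_eq_empty] at h
      rw [h, Nat.sInf_empty] at hs
      simp at hs
    have := Nat.sInf_mem hSne
    rw [hs] at this
    obtain ⟨W, hres, hcard⟩ := this
    obtain ⟨w, rfl⟩ := Finset.card_eq_one.mp hcard
    -- build a coloring by distance parity to w
    refine ⟨SimpleGraph.Coloring.mk (fun v => (⟨G.dist v w % 2, Nat.mod_lt _ (by norm_num)⟩ : Fin 2)) ?_⟩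
    intro u v huv heq
    have hdistuv : G.dist u v = 1 := SimpleGraph.dist_eq_one_iff_adj.mpr huv
    have hne : u ≠ v := huv.ne
    have hkey : G.dist u w % 2 ≠ G.dist v w % 2 := by
      by_cases hu : u = w
      · subst hu
        have hv : G.dist v u = 1 := SimpleGraph.dist_eq_one_iff_adj.mpr huv.symm
        rw [SimpleGraph.dist_self, hv]
        omega
      by_cases hv : v = w
      · subst hv
        rw [SimpleGraph.dist_self, hdistuv]
        omega
      have hne' : G.dist u w ≠ G.dist v w := by
        intro h
        exact hres u v (by simp [hu]) (by simp [hv]) huv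
          (by simp [mrep, h])
      have h1 : G.dist u w ≤ G.dist u v + G.dist v w := hconn.dist_triangle
      have h2 : G.dist v w ≤ G.dist v u + G.dist u w :=
        SimpleGraph.Connected.dist_triangle (u := v) (v := u) (w := w) hconn
      have h3 : G.dist v u = 1 := SimpleGraph.dist_eq_one_iff_adj.mpr huv.symm
      rw [hdistuv] at h1
      rw [h3] at h2
      omega
    exact hkey (congrArg Fin.val heq)
  · intro hcol
    obtain ⟨c0⟩ := hcol
    have : ∀ x y : Fin 2, x ≠ y →
        (if x = 0 then (0 : ZMod 2) else 1) ≠ (if y = 0 then 0 else 1) := by decide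
    let c : G.Coloring (ZMod 2) :=
      SimpleGraph.Coloring.mk (fun v => if c0 v = 0 then 0 else 1)
        (fun h => this _ _ (c0.valid h))
    have h1 : 1 ∈ S := by
      refine ⟨{a}, ?_, rfl⟩
      intro u v hu hv huv
      simp only [mrep, Finset.singleton_val, Multiset.map_singleton, ne_eq,
        Multiset.singleton_inj]
      intro h
      have hu' := dist_parity hconn c u a
      have hv' := dist_parity hconn c v a
      have : (c u : ZMod 2) = c v := by rw [hu', hv', h]
      exact c.valid huv this
    refine le_antisymm (Nat.sInf_le h1) ?_
    rw [Nat.one_le_iff_ne_zero]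
    intro h
    rcases Nat.sInf_eq_zero.mp h with h' | h'
    · exact h0 h'
    · exact absurd h1 (by simp [h'])
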